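/- Let G be a connected simple graph on n vertices (n odd, n ≥ 3) with chromatic number χ(G) = 2. Then ABC(G) ≤ (1/2)·sqrt((n-2)(n²-1)), with equality iff G is the complete bipartite graph K_{(n-1)/2,(n+1)/2}. -/

import Mathlib

/-- The degree of a vertex. -/
noncomputable def deg {V : Type*} (G : SimpleGraph V) (v : V) : ℕ :=
  Nat.card {w | G.Adj v w}

open scoped Classical in
/-- The atom-bond connectivity index:
`ABC(G) = ∑_{uv ∈ E(G)} sqrt((d(u)+d(v)-2)/(d(u)d(v)))`,
computed as half the sum over ordered adjacent pairs. -/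
noncomputable def ABC {V : Type*} [Fintype V] (G : SimpleGraph V) : ℝ :=
  (∑ u : V, ∑ v : V, if G.Adj u v then
    Real.sqrt (((deg G u : ℝ) + (deg G v : ℝ) - 2) / ((deg G u : ℝ) * (deg G v : ℝ)))
  else 0) / 2

/-- The complete bipartite graph on `Fin n` with parts `{0, …, m-1}` and `{m, …, n-1}`. -/
def compBipartite (n m : ℕ) : SimpleGraph (Fin n) where
  Adj u v := (u.val < m) ≠ (v.val < m)
  symm := ⟨fun u v h => h.symm⟩
  loopless := ⟨fun u h => h rfl⟩

open Finset
open scoped Classical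

namespace ABCproof

lemma fin2 (x : Fin 2) : x = 0 ∨ x = 1 := by
  fin_cases x <;> simp

lemma amgm {x y : ℝ} (hx : 0 ≤ x) (hy : 0 ≤ y) : Real.sqrt (x*y) ≤ (x+y)/2 := by
  nlinarith [sq_nonneg (Real.sqrt x - Real.sqrt y), Real.sq_sqrt hx, Real.sq_sqrt hy,
    Real.sqrt_mul hx y, Real.sqrt_nonneg x, Real.sqrt_nonneg y]

lemma amgm_eq {x y : ℝ} (hx : 0 ≤ x) (hy : 0 ≤ y) (h : Real.sqrt (x*y) = (x+y)/2) : x = y := by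
  nlinarith [sq_nonneg (Real.sqrt x - Real.sqrt y), Real.sq_sqrt hx, Real.sq_sqrt hy,
    Real.sqrt_mul hx y, Real.sqrt_nonneg x, Real.sqrt_nonneg y]

lemma mul_sqrt_div {x y : ℝ} (hx : 0 < x) (hy : 0 ≤ y) :
    x * Real.sqrt (y / x) = Real.sqrt (x * y) := by
  rw [show x * Real.sqrt (y/x) = Real.sqrt (x^2) * Real.sqrt (y/x) by rw [Real.sqrt_sq hx.le],
    ← Real.sqrt_mul (sq_nonneg x)]
  congr 1; field_simp

lemma edge_bound {du dv su sv N : ℝ} (hdu : 1 ≤ du) (hdv : 1 ≤ dv) (hsum : du + dv ≤ N)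
    (hsu : 0 ≤ su) (hsv : 0 ≤ sv) (hs : su * sv = 1) :
    Real.sqrt ((du + dv - 2)/(du*dv)) ≤ Real.sqrt (N-2) * ((su/du + sv/dv)/2) := by
  have hdu0 : (0:ℝ) < du := by linarith
  have hdv0 : (0:ℝ) < dv := by linarith
  have hN2 : (0:ℝ) ≤ N - 2 := by linarith
  have hprod : (0:ℝ) < du * dv := by positivity
  calc Real.sqrt ((du + dv - 2)/(du*dv))
      ≤ Real.sqrt ((N - 2)/(du*dv)) := by
        apply Real.sqrt_le_sqrt
        gcongr <;> linarith
    _ = Real.sqrt (N-2) * Real.sqrt ((su/du) * (sv/dv)) := by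
        rw [← Real.sqrt_mul hN2]
        congr 1
        field_simp [hs]
        linear_combination (-(N-2)) * hs
    _ ≤ Real.sqrt (N-2) * ((su/du + sv/dv)/2) := by
        apply mul_le_mul_of_nonneg_left _ (Real.sqrt_nonneg _)
        exact amgm (by positivity) (by positivity)

lemma deg_eq {n : ℕ} (G : SimpleGraph (Fin n)) (u : Fin n) :
    deg G u = (univ.filter (G.Adj u)).card := by
  rw [deg, Nat.card_eq_fintype_card]; simp [Fintype.card_subtype]

lemma exists_adj {n : ℕ} {G : SimpleGraph (Fin n)} (hconn : G.Connected) (hn : 3 ≤ n)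
    (u : Fin n) : ∃ w, G.Adj u w := by
  obtain ⟨v, hv⟩ : ∃ v : Fin n, v ≠ u :=
    Fintype.exists_ne_of_one_lt_card (by simp; omega) u
  obtain ⟨p⟩ := hconn u v
  exact ⟨p.getVert 1, SimpleGraph.Walk.adj_snd (p := p) (SimpleGraph.Walk.not_nil_of_ne (Ne.symm hv))⟩

lemma deg_pos {n : ℕ} {G : SimpleGraph (Fin n)} (hconn : G.Connected) (hn : 3 ≤ n)
    (u : Fin n) : 0 < deg G u := by
  obtain ⟨w, hw⟩ := exists_adj hconn hn u
  rw [deg_eq]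
  exact Finset.card_pos.2 ⟨w, by simp [hw]⟩

lemma card_filter_lt {n m : ℕ} (hm : m ≤ n) :
    ((univ : Finset (Fin n)).filter (fun x => x.val < m)).card = m := by
  rw [Finset.card_filter]
  rw [Fin.sum_univ_eq_sum_range (fun i => if i < m then 1 else 0)]
  have h2 : ((Finset.range n).filter (· < m)) = Finset.range m := by
    ext x; simp [Finset.mem_filter, Finset.mem_range]; omega
  rw [← Finset.card_filter] at *
  rw [h2, Finset.card_range]

lemma edge_bound_eq {du dv su sv N : ℝ} (hdu : 1 ≤ du) (hdv : 1 ≤ dv) (hsum : du + dv ≤ N)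
    (hsu : 0 ≤ su) (hsv : 0 ≤ sv) (hs : su * sv = 1) (hN : 2 < N)
    (h : Real.sqrt ((du + dv - 2)/(du*dv)) = Real.sqrt (N-2) * ((su/du + sv/dv)/2)) :
    du + dv = N ∧ su/du = sv/dv := by
  have hdu0 : (0:ℝ) < du := by linarith
  have hdv0 : (0:ℝ) < dv := by linarith
  have hN2 : (0:ℝ) < N - 2 := by linarith
  have hprod : (0:ℝ) < du * dv := by positivity
  have hXY : (su/du) * (sv/dv) = 1/(du*dv) := by field_simp [hs]; exact hs
  have hmid : Real.sqrt ((N - 2)/(du*dv)) = Real.sqrt (N-2) * Real.sqrt ((su/du) * (sv/dv)) := by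
    rw [← Real.sqrt_mul hN2.le]; congr 1; rw [hXY]; ring
  have h1 : Real.sqrt ((du + dv - 2)/(du*dv)) ≤ Real.sqrt ((N - 2)/(du*dv)) := by
    apply Real.sqrt_le_sqrt; gcongr <;> linarith
  have h2 : Real.sqrt (N-2) * Real.sqrt ((su/du) * (sv/dv)) ≤
      Real.sqrt (N-2) * ((su/du + sv/dv)/2) := by
    apply mul_le_mul_of_nonneg_left _ (Real.sqrt_nonneg _)
    exact amgm (by positivity) (by positivity)
  have heq1 : Real.sqrt ((du + dv - 2)/(du*dv)) = Real.sqrt ((N - 2)/(du*dv)) :=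
    le_antisymm h1 (by rw [hmid, h]; exact h2)
  have heq2 : Real.sqrt (N-2) * Real.sqrt ((su/du) * (sv/dv)) =
      Real.sqrt (N-2) * ((su/du + sv/dv)/2) := by
    rw [← hmid, ← heq1, h]
  constructor
  · have h5 := (Real.sqrt_inj (div_nonneg (by linarith) hprod.le)
      (div_nonneg (by linarith) hprod.le)).1 heq1
    have h3 : du + dv - 2 = N - 2 := by
      field_simp at h5
      linarith
    linarith
  · have hssqrt : (0:ℝ) < Real.sqrt (N-2) := Real.sqrt_pos.2 hN2
    have h4 : Real.sqrt ((su/du) * (sv/dv)) = (su/du + sv/dv)/2 :=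
      mul_left_cancel₀ (ne_of_gt hssqrt) heq2
    exact amgm_eq (by positivity) (by positivity) h4

lemma sum_ite_adj {n : ℕ} (G : SimpleGraph (Fin n)) (u : Fin n) (c : ℝ) :
    ∑ v, (if G.Adj u v then c else 0) = (deg G u : ℝ) * c := by
  rw [Finset.sum_ite, Finset.sum_const, Finset.sum_const, deg_eq, smul_zero, add_zero,
    nsmul_eq_mul]

lemma deg_add_le {n : ℕ} {G : SimpleGraph (Fin n)} (C : G.Coloring (Fin 2))
    {u v : Fin n} (huv : G.Adj u v) : deg G u + deg G v ≤ n := by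
  rw [deg_eq, deg_eq]
  have hdisj : Disjoint (univ.filter (G.Adj u)) (univ.filter (G.Adj v)) := by
    rw [Finset.disjoint_filter]
    intro w _ hw1 hw2
    have c1 := C.valid hw1
    have c2 := C.valid hw2
    have c3 := C.valid huv
    rcases fin2 (C u) with h | h <;> rcases fin2 (C v) with h' | h' <;>
      rcases fin2 (C w) with h'' | h'' <;> simp_all
  calc (univ.filter (G.Adj u)).card + (univ.filter (G.Adj v)).card
      = ((univ.filter (G.Adj u)) ∪ (univ.filter (G.Adj v))).card :=
        (Finset.card_union_of_disjoint hdisj).symm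
    _ ≤ (univ : Finset (Fin n)).card := Finset.card_le_card (Finset.subset_univ _)
    _ = n := by simp

lemma card_filter_not_lt {n m : ℕ} (hm : m ≤ n) :
    ((univ : Finset (Fin n)).filter (fun x => ¬ x.val < m)).card = n - m := by
  have h1 := Finset.card_filter_add_card_filter_not
    (s := (univ : Finset (Fin n))) (p := fun x => x.val < m)
  rw [card_filter_lt hm] at h1
  simp only [Finset.card_univ, Fintype.card_fin] at h1
  omega

lemma deg_iso {V W : Type*} {G : SimpleGraph V} {H : SimpleGraph W} (φ : G ≃g H) (u : V) :
    deg G u = deg H (φ u) :=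
  Nat.card_congr (φ.mapNeighborSet u)

lemma ABC_iso {V W : Type*} [Fintype V] [Fintype W] {G : SimpleGraph V} {H : SimpleGraph W}
    (φ : G ≃g H) : ABC G = ABC H := by
  unfold ABC
  congr 1
  calc (∑ u : V, ∑ v : V, if G.Adj u v then
        Real.sqrt (((deg G u : ℝ) + (deg G v : ℝ) - 2) / ((deg G u : ℝ) * (deg G v : ℝ)))
      else 0)
      = ∑ u : V, ∑ v : V, (if H.Adj (φ u) (φ v) then
        Real.sqrt (((deg H (φ u) : ℝ) + (deg H (φ v) : ℝ) - 2) /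
          ((deg H (φ u) : ℝ) * (deg H (φ v) : ℝ))) else 0) := by
        refine Finset.sum_congr rfl fun u _ => Finset.sum_congr rfl fun v _ => ?_
        rw [← deg_iso φ u, ← deg_iso φ v]
        exact if_congr (φ.map_adj_iff.symm) rfl rfl
    _ = ∑ u : W, ∑ v : W, (if H.Adj u v then
        Real.sqrt (((deg H u : ℝ) + (deg H v : ℝ) - 2) /
          ((deg H u : ℝ) * (deg H v : ℝ))) else 0) := by
        rw [← Equiv.sum_comp φ.toEquiv]
        refine Finset.sum_congr rfl fun u _ => ?_
        rw [← Equiv.sum_comp φ.toEquiv]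
        rfl

lemma build_iso {n m : ℕ} (G : SimpleGraph (Fin n)) (hm : m ≤ n) (p : Fin n → Prop)
    (hcard : (univ.filter p).card = m)
    (hadj : ∀ u v, G.Adj u v ↔ ¬(p u ↔ p v)) : Nonempty (G ≃g compBipartite n m) := by
  have hcard2 : (univ.filter (fun x => ¬ p x)).card = n - m := by
    have h1 := Finset.card_filter_add_card_filter_not
      (s := (univ : Finset (Fin n))) (p := p)
    rw [hcard] at h1
    simp only [Finset.card_univ, Fintype.card_fin] at h1
    omega
  let e1 : {x // p x} ≃ {x : Fin n // x.val < m} :=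
    (Equiv.subtypeEquivRight (by simp)).trans
      ((Finset.equivOfCardEq (s := univ.filter p) (t := univ.filter (fun x : Fin n => x.val < m))
        (by rw [hcard, card_filter_lt hm])).trans (Equiv.subtypeEquivRight (by simp)))
  let e2 : {x // ¬ p x} ≃ {x : Fin n // ¬ x.val < m} :=
    (Equiv.subtypeEquivRight (by simp)).trans
      ((Finset.equivOfCardEq (s := univ.filter (fun x => ¬ p x))
        (t := univ.filter (fun x : Fin n => ¬ x.val < m))
        (by rw [hcard2, card_filter_not_lt hm])).trans (Equiv.subtypeEquivRight (by simp)))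
  let e : Equiv.Perm (Fin n) := Equiv.subtypeCongr e1 e2
  have hkey : ∀ x, ((e x).val < m) ↔ p x := by
    intro x
    by_cases h : p x
    · have hx : e x = (e1 ⟨x, h⟩ : {x : Fin n // x.val < m}) := by
        simp [e, Equiv.subtypeCongr, h]
      rw [hx]
      simpa [h] using (e1 ⟨x, h⟩).2
    · have hx : e x = (e2 ⟨x, h⟩ : {x : Fin n // ¬ x.val < m}) := by
        simp [e, Equiv.subtypeCongr, h]
      rw [hx]
      simp [(e2 ⟨x, h⟩).2, h]
  refine ⟨⟨e, ?_⟩⟩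
  intro u v
  show ((e u).val < m) ≠ ((e v).val < m) ↔ G.Adj u v
  rw [ne_eq, eq_iff_iff, hkey, hkey, hadj]

lemma adj_compB {n m : ℕ} (u v : Fin n) :
    (compBipartite n m).Adj u v ↔ ¬((u.val < m) ↔ (v.val < m)) := by
  show ((u.val < m) ≠ (v.val < m)) ↔ _
  rw [ne_eq, eq_iff_iff]

lemma deg_compB {n m : ℕ} (hm : m ≤ n) (u : Fin n) :
    deg (compBipartite n m) u = if u.val < m then n - m else m := by
  rw [deg_eq]
  by_cases h : u.val < m
  · have hfe : univ.filter ((compBipartite n m).Adj u) =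
        univ.filter (fun v : Fin n => ¬ v.val < m) := by
      ext v; simp [adj_compB, h]
    rw [if_pos h, hfe, card_filter_not_lt hm]
  · have hfe : univ.filter ((compBipartite n m).Adj u) =
        univ.filter (fun v : Fin n => v.val < m) := by
      ext v; simp [adj_compB, h]
    rw [if_neg h, hfe, card_filter_lt hm]

lemma abc_compB {n : ℕ} (hn : 3 ≤ n) (hodd : Odd n) :
    ABC (compBipartite n ((n-1)/2)) =
      (1 / 2 : ℝ) * Real.sqrt (((n : ℝ) - 2) * ((n : ℝ) ^ 2 - 1)) := by
  obtain ⟨k, hk⟩ := hodd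
  have hk1 : 1 ≤ k := by omega
  have hm : (n-1)/2 = k := by omega
  have hmn : k ≤ n := by omega
  rw [hm]
  set H := compBipartite n k with hH
  have hdeg : ∀ u : Fin n, deg H u = if u.val < k then n - k else k := deg_compB hmn
  have hnk : n - k = k + 1 := by omega
  have hcastn : ((n:ℝ)) = 2*k+1 := by rw [hk]; push_cast; ring
  set c : ℝ := Real.sqrt (((n:ℝ)-2)/((k:ℝ)*((k:ℝ)+1))) with hc
  have hterm : ∀ u v : Fin n, H.Adj u v →
      Real.sqrt (((deg H u : ℝ) + (deg H v : ℝ) - 2) / ((deg H u : ℝ) * (deg H v : ℝ))) = c := by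
    intro u v huv
    rw [adj_compB] at huv
    by_cases h : u.val < k
    · have h' : ¬ v.val < k := by tauto
      rw [hdeg u, hdeg v, if_pos h, if_neg h', hnk]
      congr 1
      push_cast
      rw [hcastn]
      ring
    · have h' : v.val < k := by tauto
      rw [hdeg u, hdeg v, if_neg h, if_pos h', hnk]
      congr 1
      push_cast
      rw [hcastn]
      ring
  have hS : (∑ u : Fin n, ∑ v : Fin n, if H.Adj u v then
      Real.sqrt (((deg H u : ℝ) + (deg H v : ℝ) - 2) / ((deg H u : ℝ) * (deg H v : ℝ)))
      else 0) = 2*((k:ℝ)*((k:ℝ)+1)) * c := by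
    have h1 : ∀ u : Fin n, (∑ v : Fin n, if H.Adj u v then
        Real.sqrt (((deg H u : ℝ) + (deg H v : ℝ) - 2) / ((deg H u : ℝ) * (deg H v : ℝ)))
        else 0) = (deg H u : ℝ) * c := by
      intro u
      rw [← sum_ite_adj H u c]
      refine Finset.sum_congr rfl fun v _ => ?_
      by_cases huv : H.Adj u v
      · rw [if_pos huv, if_pos huv, hterm u v huv]
      · rw [if_neg huv, if_neg huv]
    calc _ = ∑ u : Fin n, (deg H u : ℝ) * c := Finset.sum_congr rfl fun u _ => h1 u
      _ = (∑ u : Fin n, (deg H u : ℝ)) * c := by rw [Finset.sum_mul]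
      _ = 2*((k:ℝ)*((k:ℝ)+1)) * c := by
          congr 1
          rw [← Finset.sum_filter_add_sum_filter_not univ (fun u : Fin n => u.val < k)]
          have e1 : ∀ u ∈ univ.filter (fun u : Fin n => u.val < k),
              (deg H u : ℝ) = (k:ℝ)+1 := by
            intro u hu
            simp only [Finset.mem_filter] at hu
            rw [hdeg u, if_pos hu.2, hnk]; push_cast; ring
          have e2 : ∀ u ∈ univ.filter (fun u : Fin n => ¬ u.val < k),
              (deg H u : ℝ) = (k:ℝ) := by
            intro u hu
            simp only [Finset.mem_filter] at hu
            rw [hdeg u, if_neg hu.2]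
          rw [Finset.sum_congr rfl e1, Finset.sum_congr rfl e2, Finset.sum_const,
            Finset.sum_const, card_filter_lt hmn, card_filter_not_lt hmn, hnk]
          push_cast
          ring
  have habc : ABC H = ((k:ℝ)*((k:ℝ)+1)) * c := by
    rw [ABC, hS]; ring
  have hk1' : (1:ℝ) ≤ (k:ℝ) := by exact_mod_cast hk1
  rw [habc, hc, mul_sqrt_div (by positivity) (by rw [hcastn]; linarith)]
  have h2 : Real.sqrt 4 = 2 := by
    rw [show (4:ℝ) = 2^2 by norm_num, Real.sqrt_sq (by norm_num : (0:ℝ) ≤ 2)]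
  have h3 : ((n:ℝ)-2) * ((n:ℝ)^2-1) = 4 * ((k:ℝ)*((k:ℝ)+1) * ((n:ℝ)-2)) := by
    rw [hcastn]; ring
  rw [h3, Real.sqrt_mul (by norm_num : (0:ℝ) ≤ 4) ((k:ℝ)*((k:ℝ)+1) * ((n:ℝ)-2)), h2]
  ring

end ABCproof

open ABCproof

set_option maxHeartbeats 1000000 in
theorem abc_max_chromatic_two_odd {n : ℕ} (hn : 3 ≤ n) (hodd : Odd n)
    (G : SimpleGraph (Fin n)) (hconn : G.Connected)
    (hchi : G.chromaticNumber = 2) :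
    ABC G ≤ (1 / 2 : ℝ) * Real.sqrt (((n : ℝ) - 2) * ((n : ℝ) ^ 2 - 1)) ∧
    (ABC G = (1 / 2 : ℝ) * Real.sqrt (((n : ℝ) - 2) * ((n : ℝ) ^ 2 - 1)) ↔
      Nonempty (G ≃g compBipartite n ((n - 1) / 2))) := by
  obtain ⟨C⟩ : G.Colorable 2 :=
    SimpleGraph.chromaticNumber_le_iff_colorable.1 (le_of_eq (by exact_mod_cast hchi))
  obtain ⟨a, ha⟩ : ∃ x : ℕ, (univ.filter (fun u : Fin n => C u = 0)).card = x := ⟨_, rfl⟩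
  obtain ⟨b, hb⟩ : ∃ x : ℕ, (univ.filter (fun u : Fin n => ¬ C u = 0)).card = x := ⟨_, rfl⟩
  have hab : a + b = n := by
    rw [← ha, ← hb]
    have := Finset.card_filter_add_card_filter_not
      (s := (univ : Finset (Fin n))) (p := fun u : Fin n => C u = 0)
    simpa using this
  have hCadj : ∀ {u v : Fin n}, G.Adj u v → C u ≠ C v := fun h => C.valid h
  have hadj_col : ∀ {u v : Fin n}, G.Adj u v → C u = 0 → ¬ C v = 0 := by
    intro u v h h0 h0'
    exact hCadj h (h0.trans h0'.symm)
  have hadj_col' : ∀ {u v : Fin n}, G.Adj u v → ¬ C u = 0 → C v = 0 := by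
    intro u v h h0
    rcases fin2 (C v) with h' | h'
    · exact h'
    · rcases fin2 (C u) with h'' | h''
      · exact absurd h'' h0
      · exact absurd (h''.trans h'.symm) (hCadj h)
  have u0 : Fin n := ⟨0, by omega⟩
  have hapos : 0 < a := by
    rw [← ha]
    obtain ⟨w, hw⟩ := exists_adj hconn hn u0
    rcases fin2 (C u0) with h | h
    · refine Finset.card_pos.2 ⟨u0, ?_⟩
      simp [h]
    · have hw0 : C w = 0 := hadj_col' hw (by simp [h])
      refine Finset.card_pos.2 ⟨w, ?_⟩
      simp [hw0]
  have hbpos : 0 < b := by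
    rw [← hb]
    obtain ⟨w, hw⟩ := exists_adj hconn hn u0
    rcases fin2 (C u0) with h | h
    · have hw0 : ¬ C w = 0 := hadj_col hw h
      refine Finset.card_pos.2 ⟨w, ?_⟩
      simp [hw0]
    · refine Finset.card_pos.2 ⟨u0, ?_⟩
      simp [h]
  have haR : (0:ℝ) < (a:ℝ) := by exact_mod_cast hapos
  have hbR : (0:ℝ) < (b:ℝ) := by exact_mod_cast hbpos
  have habR : (a:ℝ) + (b:ℝ) = (n:ℝ) := by exact_mod_cast hab
  have hd1 : ∀ u : Fin n, (1:ℝ) ≤ (deg G u : ℝ) := by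
    intro u; exact_mod_cast deg_pos hconn hn u
  have hd0 : ∀ u : Fin n, (0:ℝ) < (deg G u : ℝ) := fun u => lt_of_lt_of_le zero_lt_one (hd1 u)
  set s : Fin n → ℝ := fun u =>
    if C u = 0 then Real.sqrt ((b:ℝ)/(a:ℝ)) else Real.sqrt ((a:ℝ)/(b:ℝ)) with hs
  have hs_nonneg : ∀ u, 0 ≤ s u := by
    intro u; rw [hs]; dsimp only; split_ifs <;> exact Real.sqrt_nonneg _
  have hs_mul : ∀ {u v : Fin n}, G.Adj u v → s u * s v = 1 := by
    intro u v h
    have hsq : Real.sqrt ((b:ℝ)/(a:ℝ)) * Real.sqrt ((a:ℝ)/(b:ℝ)) = 1 := by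
      rw [← Real.sqrt_mul (by positivity)]
      rw [show ((b:ℝ)/a) * ((a:ℝ)/b) = 1 by field_simp]
      exact Real.sqrt_one
    rw [hs]; dsimp only
    by_cases h0 : C u = 0
    · rw [if_pos h0, if_neg (hadj_col h h0)]; exact hsq
    · rw [if_neg h0, if_pos (hadj_col' h h0), mul_comm]; exact hsq
  have hdsum : ∀ {u v : Fin n}, G.Adj u v → (deg G u : ℝ) + (deg G v : ℝ) ≤ (n:ℝ) := by
    intro u v h; exact_mod_cast deg_add_le C h
  have hnR : (3:ℝ) ≤ (n:ℝ) := by exact_mod_cast hn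
  set F : Fin n → Fin n → ℝ := fun u v =>
    Real.sqrt (((deg G u : ℝ) + (deg G v : ℝ) - 2) / ((deg G u : ℝ) * (deg G v : ℝ))) with hF
  set Gg : Fin n → Fin n → ℝ := fun u v =>
    Real.sqrt ((n:ℝ)-2) * ((s u/(deg G u : ℝ) + s v/(deg G v : ℝ))/2) with hGg
  have hpoint : ∀ u v : Fin n,
      (if G.Adj u v then F u v else 0) ≤ (if G.Adj u v then Gg u v else 0) := by
    intro u v
    by_cases h : G.Adj u v
    · rw [if_pos h, if_pos h]
      exact edge_bound (hd1 u) (hd1 v) (hdsum h) (hs_nonneg u) (hs_nonneg v) (hs_mul h)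
    · simp [h]
  have hU : (∑ u, ∑ v, if G.Adj u v then F u v else 0)
      ≤ (∑ u, ∑ v, if G.Adj u v then Gg u v else 0) :=
    Finset.sum_le_sum fun u _ => Finset.sum_le_sum fun v _ => hpoint u v
  have hXsum : (∑ u, ∑ v, if G.Adj u v then s u/(deg G u : ℝ) else 0) = ∑ u, s u := by
    refine Finset.sum_congr rfl fun u _ => ?_
    rw [sum_ite_adj G u (s u/(deg G u : ℝ))]
    field_simp
    exact mul_div_cancel_left₀ _ (ne_of_gt (hd0 u))
  have hYsum : (∑ u, ∑ v, if G.Adj u v then s v/(deg G v : ℝ) else 0) = ∑ u, s u := by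
    rw [Finset.sum_comm]
    refine Finset.sum_congr rfl fun v _ => ?_
    have e : ∀ u : Fin n, (if G.Adj u v then s v/(deg G v:ℝ) else 0)
        = (if G.Adj v u then s v/(deg G v:ℝ) else 0) := by
      intro u; exact if_congr (G.adj_comm u v) rfl rfl
    rw [Finset.sum_congr rfl (fun u _ => e u), sum_ite_adj G v (s v/(deg G v:ℝ))]
    field_simp
    exact mul_div_cancel_left₀ _ (ne_of_gt (hd0 v))
  have hUeq : (∑ u, ∑ v, if G.Adj u v then Gg u v else 0)
      = Real.sqrt ((n:ℝ)-2) * ∑ u, s u := by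
    have e : ∀ u v : Fin n, (if G.Adj u v then Gg u v else 0)
        = (Real.sqrt ((n:ℝ)-2)/2) * ((if G.Adj u v then s u/(deg G u : ℝ) else 0)
          + (if G.Adj u v then s v/(deg G v : ℝ) else 0)) := by
      intro u v; rw [hGg]; dsimp only; split_ifs with h
      · ring
      · ring
    calc (∑ u, ∑ v, if G.Adj u v then Gg u v else 0)
        = ∑ u, ∑ v, (Real.sqrt ((n:ℝ)-2)/2) * ((if G.Adj u v then s u/(deg G u : ℝ) else 0)
          + (if G.Adj u v then s v/(deg G v : ℝ) else 0)) :=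
          Finset.sum_congr rfl fun u _ => Finset.sum_congr rfl fun v _ => e u v
      _ = (Real.sqrt ((n:ℝ)-2)/2) * ∑ u, ∑ v, ((if G.Adj u v then s u/(deg G u : ℝ) else 0)
          + (if G.Adj u v then s v/(deg G v : ℝ) else 0)) := by
          rw [Finset.mul_sum]
          exact Finset.sum_congr rfl fun u _ => (Finset.mul_sum _ _ _).symm
      _ = (Real.sqrt ((n:ℝ)-2)/2) * ((∑ u, ∑ v, (if G.Adj u v then s u/(deg G u : ℝ) else 0))
          + (∑ u, ∑ v, (if G.Adj u v then s v/(deg G v : ℝ) else 0))) := by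
          congr 1
          rw [← Finset.sum_add_distrib]
          exact Finset.sum_congr rfl fun u _ => Finset.sum_add_distrib
      _ = Real.sqrt ((n:ℝ)-2) * ∑ u, s u := by rw [hXsum, hYsum]; ring
  have hsumS : ∑ u, s u = 2 * Real.sqrt ((a:ℝ)*(b:ℝ)) := by
    rw [← Finset.sum_filter_add_sum_filter_not univ (fun u : Fin n => C u = 0)]
    have e1 : ∀ u ∈ univ.filter (fun u : Fin n => C u = 0),
        s u = Real.sqrt ((b:ℝ)/(a:ℝ)) := by
      intro u hu; rw [hs]; simp only [Finset.mem_filter] at hu; simp [hu.2]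
    have e2 : ∀ u ∈ univ.filter (fun u : Fin n => ¬ C u = 0),
        s u = Real.sqrt ((a:ℝ)/(b:ℝ)) := by
      intro u hu; rw [hs]; simp only [Finset.mem_filter] at hu; simp [hu.2]
    rw [Finset.sum_congr rfl e1, Finset.sum_congr rfl e2, Finset.sum_const, Finset.sum_const,
      ha, hb, nsmul_eq_mul, nsmul_eq_mul, mul_sqrt_div haR hbR.le, mul_sqrt_div hbR haR.le,
      mul_comm (b:ℝ) (a:ℝ)]
    ring
  have habne : a ≠ b := by obtain ⟨k, hk⟩ := hodd; omega
  have hZ : (1:ℝ) ≤ ((a:ℝ) - (b:ℝ))^2 := by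
    have h2 : (a:ℤ) ≠ (b:ℤ) := by exact_mod_cast habne
    have h1 : (1:ℤ) ≤ ((a:ℤ) - (b:ℤ))^2 := by
      rcases lt_or_gt_of_ne h2 with h | h
      · nlinarith
      · nlinarith
    exact_mod_cast h1
  have h4ab : (4:ℝ)*((a:ℝ)*(b:ℝ)) ≤ (n:ℝ)^2 - 1 := by nlinarith [hZ, habR]
  have hn2 : (0:ℝ) ≤ (n:ℝ) - 2 := by linarith
  have h2sq : (2:ℝ) * Real.sqrt ((a:ℝ)*(b:ℝ)) = Real.sqrt (4*((a:ℝ)*(b:ℝ))) := by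
    rw [show (4:ℝ)*((a:ℝ)*(b:ℝ)) = 2^2*((a:ℝ)*(b:ℝ)) by ring,
      Real.sqrt_mul (by norm_num : (0:ℝ) ≤ 2^2), Real.sqrt_sq (by norm_num : (0:ℝ) ≤ 2)]
  have hTle : Real.sqrt ((n:ℝ)-2) * (2 * Real.sqrt ((a:ℝ)*(b:ℝ)))
      ≤ Real.sqrt (((n:ℝ)-2) * ((n:ℝ)^2-1)) := by
    rw [Real.sqrt_mul hn2, h2sq]
    exact mul_le_mul_of_nonneg_left (Real.sqrt_le_sqrt (by linarith)) (Real.sqrt_nonneg _)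
  have hSle : (∑ u, ∑ v, if G.Adj u v then F u v else 0)
      ≤ Real.sqrt (((n:ℝ)-2) * ((n:ℝ)^2-1)) := by
    calc (∑ u, ∑ v, if G.Adj u v then F u v else 0) ≤ _ := hU
      _ = Real.sqrt ((n:ℝ)-2) * ∑ u, s u := hUeq
      _ = Real.sqrt ((n:ℝ)-2) * (2 * Real.sqrt ((a:ℝ)*(b:ℝ))) := by rw [hsumS]
      _ ≤ _ := hTle
  have hABCS : ABC G = (∑ u, ∑ v, if G.Adj u v then F u v else 0) / 2 := rfl
  refine ⟨by rw [hABCS]; linarith, ?_, ?_⟩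
  · -- equality implies iso
    intro heq
    have hSeq : (∑ u, ∑ v, if G.Adj u v then F u v else 0)
        = Real.sqrt (((n:ℝ)-2)*((n:ℝ)^2-1)) := by
      rw [hABCS] at heq; linarith only [heq]
    have hUeq2 : (∑ u, ∑ v, if G.Adj u v then Gg u v else 0)
        = Real.sqrt (((n:ℝ)-2)*((n:ℝ)^2-1)) := by
      refine le_antisymm ?_ ?_
      · rw [hUeq, hsumS]; exact hTle
      · rw [← hSeq]; exact hU
    have hSU : (∑ u, ∑ v, if G.Adj u v then F u v else 0)
        = (∑ u, ∑ v, if G.Adj u v then Gg u v else 0) := by rw [hSeq, hUeq2]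
    have hptwise : ∀ u v : Fin n, G.Adj u v → F u v = Gg u v := by
      intro u v huv
      have h1 := (Finset.sum_eq_sum_iff_of_le
        (fun u _ => Finset.sum_le_sum fun v _ => hpoint u v)).1 hSU u (Finset.mem_univ u)
      have h2 := (Finset.sum_eq_sum_iff_of_le (fun v _ => hpoint u v)).1 h1 v (Finset.mem_univ v)
      rw [if_pos huv, if_pos huv] at h2
      exact h2
    have hTeq : Real.sqrt ((n:ℝ)-2) * (2*Real.sqrt ((a:ℝ)*(b:ℝ)))
        = Real.sqrt (((n:ℝ)-2)*((n:ℝ)^2-1)) := by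
      rw [← hsumS, ← hUeq]; exact hUeq2
    have hsn : (0:ℝ) < Real.sqrt ((n:ℝ)-2) := Real.sqrt_pos.2 (by linarith only [hnR])
    have h2ab : (2*Real.sqrt ((a:ℝ)*(b:ℝ))) = Real.sqrt ((n:ℝ)^2-1) := by
      rw [Real.sqrt_mul hn2] at hTeq
      exact mul_left_cancel₀ (ne_of_gt hsn) hTeq
    have h4abeq : (4:ℝ)*((a:ℝ)*(b:ℝ)) = (n:ℝ)^2 - 1 := by
      have h1 := congrArg (fun x : ℝ => x^2) h2ab
      simp only [mul_pow] at h1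
      rw [Real.sq_sqrt (by positivity), Real.sq_sqrt (by nlinarith [hnR])] at h1
      linarith only [h1]
    have h4abN : 4*a*b + 1 = n^2 := by
      have hr : (4*(a:ℝ)*(b:ℝ) + 1) = (n:ℝ)^2 := by linarith only [h4abeq]
      exact_mod_cast hr
    have hdeg_edge : ∀ u v : Fin n, G.Adj u v → C u = 0 →
        (deg G v : ℝ) = (a:ℝ) ∧ (deg G u : ℝ) = (b:ℝ) := by
      intro u v huv hu0
      have hv0 := hadj_col huv hu0
      obtain ⟨hduv, hXeq⟩ := edge_bound_eq (hd1 u) (hd1 v) (hdsum huv) (hs_nonneg u)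
        (hs_nonneg v) (hs_mul huv) (by linarith only [hnR]) (hptwise u v huv)
      rw [hs] at hXeq; dsimp only at hXeq
      rw [if_pos hu0, if_neg hv0] at hXeq
      have hcross := (div_eq_div_iff (ne_of_gt (hd0 u)) (ne_of_gt (hd0 v))).1 hXeq
      have e1 : Real.sqrt ((b:ℝ)/(a:ℝ)) * Real.sqrt ((a:ℝ)*(b:ℝ)) = (b:ℝ) := by
        rw [← Real.sqrt_mul (by positivity),
          show ((b:ℝ)/a)*((a:ℝ)*b) = (b:ℝ)^2 by field_simp]
        exact Real.sqrt_sq hbR.le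
      have e2 : Real.sqrt ((a:ℝ)/(b:ℝ)) * Real.sqrt ((a:ℝ)*(b:ℝ)) = (a:ℝ) := by
        rw [← Real.sqrt_mul (by positivity),
          show ((a:ℝ)/b)*((a:ℝ)*b) = (a:ℝ)^2 by field_simp]
        exact Real.sqrt_sq haR.le
      have h3 : (b:ℝ) * (deg G v : ℝ) = (a:ℝ) * (deg G u : ℝ) := by
        have h := congrArg (fun x : ℝ => x * Real.sqrt ((a:ℝ)*(b:ℝ))) hcross
        rw [mul_right_comm, mul_right_comm (Real.sqrt ((a:ℝ)/(b:ℝ))) (deg G u : ℝ),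
          e1, e2] at h
        exact h
      have haux : (deg G u : ℝ) + (deg G v : ℝ) = (a:ℝ) + (b:ℝ) := by rw [habR]; exact hduv
      have h5 : (deg G v : ℝ) * ((a:ℝ)+(b:ℝ)) = (a:ℝ) * ((a:ℝ)+(b:ℝ)) := by
        linear_combination h3 + (a:ℝ)*haux
      have h6 : (deg G v : ℝ) = (a:ℝ) := mul_right_cancel₀ (by positivity) h5
      exact ⟨h6, by linarith only [haux, h6]⟩
    have hdeg_all : ∀ u : Fin n, deg G u = if C u = 0 then b else a := by
      intro u
      obtain ⟨w, hw⟩ := exists_adj hconn hn u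
      by_cases h : C u = 0
      · rw [if_pos h]
        exact_mod_cast (hdeg_edge u w hw h).2
      · rw [if_neg h]
        have hw0 : C w = 0 := hadj_col' hw h
        exact_mod_cast (hdeg_edge w u hw.symm hw0).1
    have hone : ∀ u v : Fin n, C u = 0 → ¬ C v = 0 → G.Adj u v := by
      intro u v hu hv
      have hsub : univ.filter (G.Adj u) ⊆ univ.filter (fun w : Fin n => ¬ C w = 0) := by
        intro w hwmem
        simp only [Finset.mem_filter, Finset.mem_univ, true_and] at hwmem ⊢
        exact hadj_col hwmem hu
      have hcards : (univ.filter (fun w : Fin n => ¬ C w = 0)).card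
          ≤ (univ.filter (G.Adj u)).card := by
        rw [hb, ← deg_eq, hdeg_all u, if_pos hu]
      have heqf := Finset.eq_of_subset_of_card_le hsub hcards
      have hv2 : v ∈ univ.filter (G.Adj u) := by
        rw [heqf]; simp [hv]
      simpa using hv2
    have hadj_iff : ∀ u v : Fin n, G.Adj u v ↔ ¬ (C u = C v) := by
      intro u v
      constructor
      · exact fun h => hCadj h
      · intro hne
        by_cases h : C u = 0
        · exact hone u v h (fun hv => hne (h.trans hv.symm))
        · have hv : C v = 0 := by
            rcases fin2 (C v) with h' | h'
            · exact h'
            · rcases fin2 (C u) with h'' | h''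
              · exact absurd h'' h
              · exact absurd (h''.trans h'.symm) hne
          exact (hone v u hv h).symm
    obtain ⟨k, hk⟩ := hodd
    have h2an : (2*(a:ℤ) - (n:ℤ))^2 = 1 := by
      have h1 : (a:ℤ) + (b:ℤ) = (n:ℤ) := by exact_mod_cast hab
      have h2 : 4*(a:ℤ)*(b:ℤ) + 1 = (n:ℤ)^2 := by exact_mod_cast h4abN
      linear_combination 4*(a:ℤ)*h1 - h2
    have hfac : (2*(a:ℤ) - (n:ℤ) - 1)*(2*(a:ℤ) - (n:ℤ) + 1) = 0 := by linear_combination h2an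
    have ham : a = (n-1)/2 ∨ b = (n-1)/2 := by
      rcases mul_eq_zero.1 hfac with h | h <;> omega
    rcases ham with ham | ham
    · refine build_iso G (by omega) (fun u => C u = 0) (by rw [Finset.filter_congr_decidable, ha]; exact ham) ?_
      intro u v
      rw [hadj_iff u v]
      rcases fin2 (C u) with h | h <;> rcases fin2 (C v) with h' | h' <;> simp [h, h']
    · refine build_iso G (by omega) (fun u => ¬ C u = 0) (by rw [Finset.filter_congr_decidable, hb]; exact ham) ?_
      intro u v
      rw [hadj_iff u v]
      rcases fin2 (C u) with h | h <;> rcases fin2 (C v) with h' | h' <;> simp [h, h']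
  · rintro ⟨φ⟩
    exact (ABC_iso φ).trans (abc_compB hn hodd)
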